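/- arXiv:2310.07923 — 6 statements merged into one kernel-verified Lean document; each statement's English description precedes it below -/
import Mathlib

section
/- For all real numbers q and k, the Euclidean inner product of the layer-norm hashes satisfies φ(q, 1) · φ(k, 1) = (qk + 1)/√((q² + 1)(k² + 1)). -/
open scoped RealInnerProductSpace

/-- Layer norm: subtract the mean, then normalize to unit Euclidean norm. -/
noncomputable def layerNorm {ι : Type*} [Fintype ι] (v : EuclideanSpace ℝ ι) :
    EuclideanSpace ℝ ι :=
  let c : EuclideanSpace ℝ ι := WithLp.toLp 2 (fun j => v j - (∑ l, v l) / (Fintype.card ι))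
  ‖c‖⁻¹ • c

/-- The layer-norm hash φ(x, y) = layer_norm(⟨x, y, −x, −y⟩) ∈ ℝ⁴. -/
noncomputable def lnHash (x y : ℝ) : EuclideanSpace ℝ (Fin 4) :=
  layerNorm (WithLp.toLp 2 ![x, y, -x, -y] : EuclideanSpace ℝ (Fin 4))

lemma lnHash_eq (x : ℝ) : lnHash x 1 =
    (Real.sqrt (2 * x ^ 2 + 2))⁻¹ • (WithLp.toLp 2 ![x, 1, -x, -1] : EuclideanSpace ℝ (Fin 4)) := by
  unfold lnHash layerNorm
  have hc : (WithLp.toLp 2 (fun j => (WithLp.toLp 2 ![x, 1, -x, -1] : EuclideanSpace ℝ (Fin 4)) j -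
      (∑ l, (WithLp.toLp 2 ![x, 1, -x, -1] : EuclideanSpace ℝ (Fin 4)) l) / (Fintype.card (Fin 4))) : EuclideanSpace ℝ (Fin 4)) =
      (WithLp.toLp 2 ![x, 1, -x, -1] : EuclideanSpace ℝ (Fin 4)) := by
    have : (∑ l, (WithLp.toLp 2 ![x, 1, -x, -1] : EuclideanSpace ℝ (Fin 4)) l) = 0 := by
      simp [Fin.sum_univ_four]
    congr 1
    funext j
    simp [this]
  simp only [hc]
  congr 1
  rw [EuclideanSpace.norm_eq]
  congr 1
  simp [Fin.sum_univ_four]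
  ring

/-- Inner product formula: φ(q,1) · φ(k,1) = (qk + 1)/√((q² + 1)(k² + 1)). -/
theorem lnHash_inner_formula (q k : ℝ) :
    ⟪lnHash q 1, lnHash k 1⟫ = (q * k + 1) / Real.sqrt ((q ^ 2 + 1) * (k ^ 2 + 1)) := by
  rw [lnHash_eq, lnHash_eq, real_inner_smul_left, real_inner_smul_right]
  have hq : (0:ℝ) < 2 * q ^ 2 + 2 := by positivity
  have hk : (0:ℝ) < 2 * k ^ 2 + 2 := by positivity
  simp only [PiLp.inner_apply, RCLike.inner_apply, conj_trivial, Fin.sum_univ_four,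
    Matrix.cons_val_zero, Matrix.cons_val_one, Matrix.head_cons, Matrix.cons_val_two,
    Matrix.tail_cons, Matrix.cons_val_three, PiLp.toLp_apply]
  have hmul : Real.sqrt (2 * q ^ 2 + 2) * Real.sqrt (2 * k ^ 2 + 2) =
      2 * Real.sqrt ((q ^ 2 + 1) * (k ^ 2 + 1)) := by
    rw [← Real.sqrt_mul hq.le,
      show (2 * q ^ 2 + 2) * (2 * k ^ 2 + 2) = 4 * ((q ^ 2 + 1) * (k ^ 2 + 1)) by ring,
      Real.sqrt_mul (by norm_num : (0:ℝ) ≤ 4),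
      show Real.sqrt 4 = 2 by
        rw [show (4:ℝ) = 2 ^ 2 by norm_num, Real.sqrt_sq (by norm_num)]]
  have hs : (0:ℝ) < Real.sqrt ((q ^ 2 + 1) * (k ^ 2 + 1)) := Real.sqrt_pos.mpr (by positivity)
  have hqs : (0:ℝ) < Real.sqrt (2 * q ^ 2 + 2) := Real.sqrt_pos.mpr hq
  have hks : (0:ℝ) < Real.sqrt (2 * k ^ 2 + 2) := Real.sqrt_pos.mpr hk
  have hmul2 : Real.sqrt ((q ^ 2 + 1) * (k ^ 2 + 1)) =
      Real.sqrt (q ^ 2 + 1) * Real.sqrt (k ^ 2 + 1) := Real.sqrt_mul (by positivity) _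
  field_simp
  rw [show (2:ℝ) * (q ^ 2 + 1) = 2 * q ^ 2 + 2 by ring, show (2:ℝ) * (k ^ 2 + 1) = 2 * k ^ 2 + 2 by ring]
  linear_combination -(q * k + 1) * hmul
end

section
/- For all real numbers q and k, the Euclidean inner product φ(q, 1) · φ(k, 1) equals 1 if and only if q = k (equality check via layer-norm hash). -/
open scoped RealInnerProductSpace

noncomputable def vv (q : ℝ) : EuclideanSpace ℝ (Fin 4) := WithLp.toLp 2 ![q, 1, -q, -1]

lemma lnHash_eq_s3 (q : ℝ) : lnHash q 1 = ‖vv q‖⁻¹ • vv q := by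
  unfold lnHash layerNorm
  have hc : WithLp.toLp 2 (fun j => (WithLp.toLp 2 ![q, 1, -q, -1] : EuclideanSpace ℝ (Fin 4)) j -
      (∑ l, (WithLp.toLp 2 ![q, 1, -q, -1] : EuclideanSpace ℝ (Fin 4)) l) / (Fintype.card (Fin 4)))
      = vv q := by
    ext j
    simp [vv, Fin.sum_univ_four]
  simp only [hc]

lemma vne (q : ℝ) : vv q ≠ 0 := by
  intro h
  have : vv q 1 = 0 := by rw [h]; rfl
  simp [vv] at this

lemma norm_lnHash (q : ℝ) : ‖lnHash q 1‖ = 1 := by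
  rw [lnHash_eq_s3, norm_smul]
  have h : ‖vv q‖ ≠ 0 := norm_ne_zero_iff.mpr (vne q)
  rw [Real.norm_eq_abs, abs_inv, abs_norm, inv_mul_cancel₀ h]

/-- Equality check via layer-norm hash: φ(q,1) · φ(k,1) = 1 iff q = k. -/
theorem lnHash_inner_eq_one_iff (q k : ℝ) :
    ⟪lnHash q 1, lnHash k 1⟫ = 1 ↔ q = k := by
  rw [inner_eq_one_iff_of_norm_eq_one (norm_lnHash q) (norm_lnHash k)]
  constructor
  · intro h
    rw [lnHash_eq_s3, lnHash_eq_s3] at h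
    set a := ‖vv q‖⁻¹ with ha
    set b := ‖vv k‖⁻¹ with hb
    have h1 := congrArg (fun v : EuclideanSpace ℝ (Fin 4) => v 1) h
    have h0 := congrArg (fun v : EuclideanSpace ℝ (Fin 4) => v 0) h
    simp only [PiLp.smul_apply, smul_eq_mul, vv, PiLp.toLp_apply] at h1 h0
    have hab : a = b := by simpa using h1
    have hane : a ≠ 0 := by
      rw [ha]
      exact inv_ne_zero (norm_ne_zero_iff.mpr (vne q))
    rw [← hab] at h0
    have : (![q, 1, -q, -1] : Fin 4 → ℝ) 0 = (![k, 1, -k, -1] : Fin 4 → ℝ) 0 :=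
      mul_left_cancel₀ hane h0
    simpa using this
  · rintro rfl; rfl
end

section
/- Let q ∈ ℤ, let m ≥ 1, and let k₁, …, k_m ∈ ℤ. If either q > k_j for all 1 ≤ j ≤ m, or q < k_j for all 1 ≤ j ≤ m, then φ(q, 1) ≠ (1/m) · Σ_{j=1}^m φ(k_j, 1); that is, the layer-norm hash of q is distinct from the average of the layer-norm hashes of the k_j. -/
open scoped RealInnerProductSpace

/-- First coordinate of the layer-norm hash of (x, 1). -/
lemma lnHash_apply_zero (x : ℝ) : lnHash x 1 0 = x / Real.sqrt (2 * x ^ 2 + 2) := by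
  simp only [lnHash, layerNorm, PiLp.toLp_apply, PiLp.smul_apply, smul_eq_mul, EuclideanSpace.norm_eq,
    Fin.sum_univ_four, Matrix.cons_val_zero, Matrix.cons_val_one, Matrix.head_cons,
    Matrix.cons_val_two, Matrix.tail_cons, Matrix.cons_val_three, Fintype.card_fin,
    Real.norm_eq_abs, sq_abs]
  ring_nf

/-- x ↦ x / √(2x² + 2) is strictly increasing. -/
lemma lnHash_f_strictMono : StrictMono (fun x : ℝ => x / Real.sqrt (2 * x ^ 2 + 2)) := by
  intro a b hab
  have ha : (0:ℝ) < Real.sqrt (2 * a ^ 2 + 2) := Real.sqrt_pos.mpr (by positivity)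
  have hb : (0:ℝ) < Real.sqrt (2 * b ^ 2 + 2) := Real.sqrt_pos.mpr (by positivity)
  have hsa : Real.sqrt (2 * a ^ 2 + 2) ^ 2 = 2 * a ^ 2 + 2 := Real.sq_sqrt (by positivity)
  have hsb : Real.sqrt (2 * b ^ 2 + 2) ^ 2 = 2 * b ^ 2 + 2 := Real.sq_sqrt (by positivity)
  simp only
  rw [div_lt_div_iff₀ ha hb]
  set sa := Real.sqrt (2 * a ^ 2 + 2)
  set sb := Real.sqrt (2 * b ^ 2 + 2)
  rcases le_or_gt 0 a with h0a | h0a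
  · have hb0 : (0:ℝ) < b := lt_of_le_of_lt h0a hab
    have hsq : (a * sb) ^ 2 < (b * sa) ^ 2 := by nlinarith
    exact lt_of_pow_lt_pow_left₀ 2 (by positivity) hsq
  · rcases le_or_gt b 0 with h0b | h0b
    · have hsq : (-(b * sa)) ^ 2 < (-(a * sb)) ^ 2 := by nlinarith
      have h1 : 0 ≤ -(a * sb) := by nlinarith
      have := lt_of_pow_lt_pow_left₀ 2 h1 hsq
      linarith
    · calc a * sb < 0 := by nlinarith
        _ ≤ b * sa := by positivity

/-- If q is strictly greater than every k_j, or strictly less than every k_j, then the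
layer-norm hash of q differs from the average of the layer-norm hashes of the k_j. -/
theorem lnHash_ne_avg_of_strict (q : ℤ) (m : ℕ) (hm : 1 ≤ m) (k : Fin m → ℤ)
    (h : (∀ j, k j < q) ∨ (∀ j, q < k j)) :
    lnHash (q : ℝ) 1 ≠ (1 / (m : ℝ)) • ∑ j, lnHash ((k j : ℤ) : ℝ) 1 := by
  intro heq
  have h0 := congrArg (fun v : EuclideanSpace ℝ (Fin 4) => v 0) heq
  simp only [PiLp.smul_apply, smul_eq_mul] at h0
  have hsum0 : (∑ j, lnHash ((k j : ℤ) : ℝ) 1) 0 = ∑ j, (lnHash ((k j : ℤ) : ℝ) 1) 0 :=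
    by rw [WithLp.ofLp_sum]; exact Finset.sum_apply _ _ _
  rw [hsum0] at h0
  set f : ℝ → ℝ := fun x => x / Real.sqrt (2 * x ^ 2 + 2) with hf
  have hzf : ∀ x : ℝ, lnHash x 1 0 = f x := lnHash_apply_zero
  simp only [hzf] at h0
  have hm' : (0:ℝ) < m := by exact_mod_cast hm
  have hne : (Finset.univ : Finset (Fin m)).Nonempty :=
    Finset.univ_nonempty_iff.mpr (Fin.pos_iff_nonempty.mp hm)
  rcases h with h | h
  · have hlt : ∑ j, f ((k j : ℤ) : ℝ) < ∑ _j : Fin m, f (q : ℝ) :=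
      Finset.sum_lt_sum_of_nonempty hne fun j _ =>
        lnHash_f_strictMono (by exact_mod_cast h j)
    rw [Finset.sum_const, Finset.card_univ, Fintype.card_fin, nsmul_eq_mul] at hlt
    rw [h0] at hlt
    rw [div_mul_eq_mul_div, one_mul, mul_comm, div_mul_cancel₀ _ (ne_of_gt hm')] at hlt
    exact lt_irrefl _ hlt
  · have hlt : ∑ _j : Fin m, f (q : ℝ) < ∑ j, f ((k j : ℤ) : ℝ) :=
      Finset.sum_lt_sum_of_nonempty hne fun j _ =>
        lnHash_f_strictMono (by exact_mod_cast h j)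
    rw [Finset.sum_const, Finset.card_univ, Fintype.card_fin, nsmul_eq_mul] at hlt
    rw [h0] at hlt
    rw [div_mul_eq_mul_div, one_mul, mul_comm, div_mul_cancel₀ _ (ne_of_gt hm')] at hlt
    exact lt_irrefl _ hlt
end

section
/- For every real number i ≥ 2, the Euclidean inner product of adjacent layer-norm hashes satisfies φ(i, 1) · φ(i − 1, 1) ≤ 1 − 1/(2i⁴). -/
open scoped RealInnerProductSpace

lemma lnHash_one_eq (x : ℝ) :
    lnHash x 1 = (Real.sqrt (2*x^2+2))⁻¹ • (WithLp.toLp 2 ![x, 1, -x, -1] : EuclideanSpace ℝ (Fin 4)) := by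
  unfold lnHash layerNorm
  have h1 : (fun j => (WithLp.toLp 2 ![x, 1, -x, -1] : EuclideanSpace ℝ (Fin 4)) j -
      (∑ l, (WithLp.toLp 2 ![x, 1, -x, -1] : EuclideanSpace ℝ (Fin 4)) l) / (Fintype.card (Fin 4))) =
      ![x, 1, -x, -1] := by
    funext j
    simp [Fin.sum_univ_four]
  simp only [h1]
  congr 1
  rw [EuclideanSpace.norm_eq]
  congr 1
  simp [Fin.sum_univ_four]
  ring

lemma inner_vec (x y : ℝ) (v w : EuclideanSpace ℝ (Fin 4)) (hv : v = WithLp.toLp 2 ![x, 1, -x, -1])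
    (hw : w = WithLp.toLp 2 ![y, 1, -y, -1]) : ⟪v, w⟫ = 2*x*y + 2 := by
  subst hv hw
  simp [PiLp.inner_apply, Fin.sum_univ_four]
  ring

/-- For i ≥ 2, φ(i,1) · φ(i−1,1) ≤ 1 − 1/(2i⁴). -/
theorem lnHash_adjacent_inner_bound (i : ℝ) (hi : 2 ≤ i) :
    ⟪lnHash i 1, lnHash (i - 1) 1⟫ ≤ 1 - 1 / (2 * i ^ 4) := by
  have hi0 : (0:ℝ) < i := lt_of_lt_of_le two_pos hi
  have hi4 : (0:ℝ) < i^4 := by positivity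
  set s := Real.sqrt (2*i^2+2) with hs_def
  set t := Real.sqrt (2*(i-1)^2+2) with ht_def
  have hs : 0 < s := Real.sqrt_pos.mpr (by positivity)
  have ht : 0 < t := Real.sqrt_pos.mpr (by positivity)
  have hs2 : s^2 = 2*i^2+2 := Real.sq_sqrt (by positivity)
  have ht2 : t^2 = 2*(i-1)^2+2 := Real.sq_sqrt (by positivity)
  have hinner : ⟪lnHash i 1, lnHash (i - 1) 1⟫ = s⁻¹ * t⁻¹ * (2*i*(i-1) + 2) := by
    rw [lnHash_one_eq i, lnHash_one_eq (i-1), real_inner_smul_left, real_inner_smul_right,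
      inner_vec i (i-1) _ _ rfl rfl]
    ring
  rw [hinner]
  have heps : 0 ≤ 1 - 1/(2*i^4) := by
    rw [sub_nonneg]
    rw [div_le_one (by positivity)]
    nlinarith
  have hkey : 2*i*(i-1) + 2 ≤ (1 - 1/(2*i^4)) * (s*t) := by
    have hsq : (2*i*(i-1)+2)^2 ≤ ((1 - 1/(2*i^4)) * (s*t))^2 := by
      have hst2 : (s*t)^2 = (2*i^2+2)*(2*(i-1)^2+2) := by
        rw [mul_pow, hs2, ht2]
      have hmain : (2*i^4)^2 * (2*i*(i-1)+2)^2 ≤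
          (2*i^4)^2 * ((1 - 1/(2*i^4))^2 * ((2*i^2+2)*(2*(i-1)^2+2))) := by
        have h : (2*i^4)^2 * ((1 - 1/(2*i^4))^2 * ((2*i^2+2)*(2*(i-1)^2+2)))
            = (2*i^4-1)^2 * ((2*i^2+2)*(2*(i-1)^2+2)) := by
          field_simp
        rw [h]
        nlinarith [sq_nonneg (i-2), sq_nonneg (i*(i-2)), sq_nonneg (i^2*(i-2)),
          sq_nonneg (i^3*(i-2)), sq_nonneg i, mul_pos hi4 hi4, sq_nonneg (i^2-i+1),
          pow_pos hi0 6, pow_pos hi0 4]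
      rw [← hst2] at hmain
      rw [mul_pow ((1:ℝ) - 1/(2*i^4)) (s*t) 2]
      exact le_of_mul_le_mul_left hmain (by positivity)
    have hpos : 0 ≤ (1 - 1/(2*i^4)) * (s*t) := mul_nonneg heps (le_of_lt (mul_pos hs ht))
    nlinarith [hsq, hpos]
  have hst : 0 < s * t := mul_pos hs ht
  calc s⁻¹ * t⁻¹ * (2*i*(i-1) + 2) = (2*i*(i-1) + 2) / (s*t) := by
        field_simp
    _ ≤ 1 - 1/(2*i^4) := by
        rw [div_le_iff₀ hst]
        exact hkey
end

section
/- For every integer i ≥ 2 and all distinct integers a, b with |a| ≤ i and |b| ≤ i, the Euclidean inner product of the layer-norm hashes satisfies φ(a, 1) · φ(b, 1) ≤ 1 − 1/(2i⁴). -/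
open scoped RealInnerProductSpace

noncomputable def lnAux (x : ℝ) : EuclideanSpace ℝ (Fin 4) := WithLp.toLp 2 ![x, 1, -x, -1]

lemma lnHash_eq_aux (x : ℝ) : lnHash x 1 = ‖lnAux x‖⁻¹ • lnAux x := by
  unfold lnHash layerNorm lnAux
  dsimp only
  have hc : (WithLp.toLp 2 fun j => (WithLp.toLp 2 ![x, 1, -x, -1] : EuclideanSpace ℝ (Fin 4)) j -
      (∑ l, (WithLp.toLp 2 ![x, 1, -x, -1] : EuclideanSpace ℝ (Fin 4)) l) / (Fintype.card (Fin 4)) :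
      EuclideanSpace ℝ (Fin 4)) = WithLp.toLp 2 ![x, 1, -x, -1] := by
    ext j
    fin_cases j <;> simp [Fin.sum_univ_four]
  rw [hc]

lemma norm_lnAux (x : ℝ) : ‖lnAux x‖ = Real.sqrt (2 * x ^ 2 + 2) := by
  rw [EuclideanSpace.norm_eq]
  congr 1
  simp [lnAux, Fin.sum_univ_four]
  ring

lemma inner_lnAux (x y : ℝ) : ⟪lnAux x, lnAux y⟫ = 2 * (x * y) + 2 := by
  rw [PiLp.inner_apply]
  simp [lnAux, Fin.sum_univ_four]
  ring

lemma inner_lnHash (x y : ℝ) :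
    ⟪lnHash x 1, lnHash y 1⟫ =
      (x * y + 1) / Real.sqrt ((x ^ 2 + 1) * (y ^ 2 + 1)) := by
  rw [lnHash_eq_aux, lnHash_eq_aux, real_inner_smul_left, real_inner_smul_right, inner_lnAux,
    norm_lnAux, norm_lnAux]
  have hx : (0:ℝ) < 2 * x ^ 2 + 2 := by positivity
  have h1 : Real.sqrt (2 * x ^ 2 + 2) * Real.sqrt (2 * y ^ 2 + 2)
      = 2 * Real.sqrt ((x ^ 2 + 1) * (y ^ 2 + 1)) := by
    rw [← Real.sqrt_mul hx.le]
    rw [show (2 * x ^ 2 + 2) * (2 * y ^ 2 + 2) = 4 * ((x ^ 2 + 1) * (y ^ 2 + 1)) by ring,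
      Real.sqrt_mul (by norm_num : (0:ℝ) ≤ 4)]
    rw [show (4:ℝ) = 2^2 by norm_num, Real.sqrt_sq (by norm_num : (0:ℝ) ≤ 2)]
  rw [show ((Real.sqrt (2 * x ^ 2 + 2))⁻¹ * ((Real.sqrt (2 * y ^ 2 + 2))⁻¹ * (2 * (x * y) + 2)))
      = (2 * (x * y) + 2) / (Real.sqrt (2 * x ^ 2 + 2) * Real.sqrt (2 * y ^ 2 + 2)) by
    rw [div_eq_mul_inv, mul_inv]; ring]
  rw [h1, show 2 * (x * y) + 2 = 2 * (x * y + 1) by ring,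
    mul_div_mul_left _ _ (two_ne_zero)]

lemma lnHash_key_int (i a b : ℤ) (hi : 2 ≤ i) (hab : a ≠ b) (ha : |a| ≤ i) (hb : |b| ≤ i) :
    (a ^ 2 + 1) * (b ^ 2 + 1) ≤ i ^ 4 * (a - b) ^ 2 := by
  have ha2 : a ^ 2 ≤ i ^ 2 := by nlinarith [abs_nonneg a, sq_abs a, abs_nonneg b]
  have hb2 : b ^ 2 ≤ i ^ 2 := by nlinarith [abs_nonneg b, sq_abs b]
  have hi2 : 4 ≤ i ^ 2 := by nlinarith
  rcases le_or_gt 2 (|a - b|) with h | h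
  · have h4 : 4 ≤ (a - b) ^ 2 := by nlinarith [sq_abs (a - b), abs_nonneg (a-b)]
    have h5 : (a ^ 2 + 1) * (b ^ 2 + 1) ≤ (i ^ 2 + 1) * (i ^ 2 + 1) :=
      mul_le_mul (by linarith) (by linarith) (by positivity) (by positivity)
    have h6 : i ^ 4 * 4 ≤ i ^ 4 * (a - b) ^ 2 :=
      mul_le_mul_of_nonneg_left h4 (by positivity)
    nlinarith [h5, h6, hi2]
  · have h1 : |a - b| = 1 := by
      have : 1 ≤ |a - b| := by
        rcases eq_or_ne (a-b) 0 with h0 | h0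
        · exact absurd (by linarith [sub_eq_zero.mp h0]) hab
        · exact Int.one_le_abs h0
      omega
    rcases abs_eq (by norm_num : (0:ℤ) ≤ 1) |>.mp h1 with h1 | h1
    · have hA : a = b + 1 := by linarith
      subst hA
      have hd : (b + 1 - b) ^ 2 = 1 := by ring
      rw [hd, mul_one]
      have hbl : -i ≤ b := by cases abs_le.mp hb; assumption
      have hbu : b ≤ i - 1 := by
        have := (abs_le.mp ha).2; linarith
      nlinarith [mul_nonneg (sub_nonneg.mpr hbu) (by linarith : (0:ℤ) ≤ b + i), hi2,
        sq_nonneg (b+1), sq_nonneg b, sq_nonneg i]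
    · have hA : b = a + 1 := by linarith
      subst hA
      have hd : (a - (a+1)) ^ 2 = 1 := by ring
      rw [hd, mul_one]
      have hal : -i ≤ a := by cases abs_le.mp ha; assumption
      have hau : a ≤ i - 1 := by
        have := (abs_le.mp hb).2; linarith
      nlinarith [mul_nonneg (sub_nonneg.mpr hau) (by linarith : (0:ℤ) ≤ a + i), hi2,
        sq_nonneg (a+1), sq_nonneg a, sq_nonneg i]

/-- For integers a ≠ b with |a|, |b| ≤ i and i ≥ 2, φ(a,1) · φ(b,1) ≤ 1 − 1/(2i⁴). -/
theorem lnHash_distinct_inner_bound (i a b : ℤ) (hi : 2 ≤ i) (hab : a ≠ b)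
    (ha : |a| ≤ i) (hb : |b| ≤ i) :
    ⟪lnHash (a : ℝ) 1, lnHash (b : ℝ) 1⟫ ≤ 1 - 1 / (2 * (i : ℝ) ^ 4) := by
  rw [inner_lnHash]
  have hI : (2:ℝ) ≤ (i:ℝ) := by exact_mod_cast hi
  set A : ℝ := (a : ℝ)
  set B : ℝ := (b : ℝ)
  set I : ℝ := (i : ℝ)
  set J : ℝ := I ^ 4 with hJdef
  have hI2 : (4:ℝ) ≤ I ^ 2 := by nlinarith
  have hJ : (16:ℝ) ≤ J := by
    rw [hJdef]
    nlinarith [sq_nonneg (I ^ 2 - 4)]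
  have hJ0 : (0:ℝ) < J := by linarith
  have hεle : 1 / (2 * J) ≤ 1/2 := by
    apply one_div_le_one_div_of_le (by norm_num)
    linarith
  have hεpos : (0:ℝ) < 1 / (2 * J) := by positivity
  have hε1 : (0:ℝ) ≤ 1 - 1 / (2 * J) := by linarith
  have hP : (0:ℝ) < (A ^ 2 + 1) * (B ^ 2 + 1) := by positivity
  have hsP : (0:ℝ) < Real.sqrt ((A ^ 2 + 1) * (B ^ 2 + 1)) := Real.sqrt_pos.mpr hP
  rw [div_le_iff₀ hsP]
  rcases le_or_gt (A * B + 1) 0 with hneg | hpos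
  · exact le_trans hneg (mul_nonneg hε1 (Real.sqrt_nonneg _))
  · have hkey : (A ^ 2 + 1) * (B ^ 2 + 1) ≤ J * (A - B) ^ 2 := by
      have h := lnHash_key_int i a b hi hab ha hb
      have h2 : (((a ^ 2 + 1) * (b ^ 2 + 1) : ℤ) : ℝ) ≤ ((i ^ 4 * (a - b) ^ 2 : ℤ) : ℝ) := by
        exact_mod_cast h
      push_cast at h2
      exact h2
    have hid : (1 - 1 / (2 * J)) ^ 2 * (4 * J ^ 2) = (2 * J - 1) ^ 2 := by
      have e : 1 - 1 / (2 * J) = (2 * J - 1) / (2 * J) := by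
        field_simp
      rw [e, div_pow, show (2 * J) ^ 2 = 4 * J ^ 2 by ring]
      exact div_mul_cancel₀ _ (by positivity)
    have h2' : (A * B + 1) ^ 2 * (4 * J ^ 2)
        ≤ ((1 - 1 / (2 * J)) ^ 2 * ((A ^ 2 + 1) * (B ^ 2 + 1))) * (4 * J ^ 2) := by
      have hDP : (A * B + 1) ^ 2 = (A ^ 2 + 1) * (B ^ 2 + 1) - (A - B) ^ 2 := by ring
      rw [show ((1 - 1 / (2 * J)) ^ 2 * ((A ^ 2 + 1) * (B ^ 2 + 1))) * (4 * J ^ 2)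
          = ((1 - 1 / (2 * J)) ^ 2 * (4 * J ^ 2)) * ((A ^ 2 + 1) * (B ^ 2 + 1)) by ring, hid,
        hDP]
      have hm : (4 * J - 1) * ((A ^ 2 + 1) * (B ^ 2 + 1)) ≤ (4 * J - 1) * (J * (A - B) ^ 2) :=
        mul_le_mul_of_nonneg_left hkey (by linarith)
      nlinarith [sq_nonneg (A - B), hP, hJ0, hm]
    have h2 : (A * B + 1) ^ 2 ≤ (1 - 1 / (2 * J)) ^ 2 * ((A ^ 2 + 1) * (B ^ 2 + 1)) :=
      le_of_mul_le_mul_right h2' (by positivity)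
    calc A * B + 1 = Real.sqrt ((A * B + 1) ^ 2) := (Real.sqrt_sq hpos.le).symm
      _ ≤ Real.sqrt ((1 - 1 / (2 * J)) ^ 2 * ((A ^ 2 + 1) * (B ^ 2 + 1))) :=
            Real.sqrt_le_sqrt h2
      _ = (1 - 1 / (2 * J)) * Real.sqrt ((A ^ 2 + 1) * (B ^ 2 + 1)) := by
            rw [Real.sqrt_mul (sq_nonneg _), Real.sqrt_sq hε1]
end

section
/- Let k ≥ 1 and let v₁, …, v_k ∈ ℝ^m be vectors such that, for each j, the entries of v_j sum to 0 and ‖v_j‖₂ = 1. Then the layer-norm of the concatenated vector ⟨v₁, …, v_k⟩ ∈ ℝ^{km} equals (1/√k) · ⟨v₁, …, v_k⟩. -/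
/-- If v₁, …, v_k ∈ ℝ^m each have entries summing to 0 and unit Euclidean norm, then the
layer-norm of their concatenation (indexed by Fin k × Fin m, ordered lexicographically,
i.e., ⟨v₁, …, v_k⟩ ∈ ℝ^{km}) equals (1/√k) times the concatenation. -/
theorem layerNorm_concat (k m : ℕ) (hk : 1 ≤ k)
    (v : Fin k → EuclideanSpace ℝ (Fin m))
    (hsum : ∀ j, ∑ l, v j l = 0) (hnorm : ∀ j, ‖v j‖ = 1) :
    layerNorm (WithLp.toLp 2 (fun p : Fin k × Fin m => v p.1 p.2)) =
      (Real.sqrt k)⁻¹ • (WithLp.toLp 2 (fun p : Fin k × Fin m => v p.1 p.2) : EuclideanSpace ℝ (Fin k × Fin m)) := by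
  set w : EuclideanSpace ℝ (Fin k × Fin m) := WithLp.toLp 2 (fun p : Fin k × Fin m => v p.1 p.2) with hw
  have hsumw : ∑ p : Fin k × Fin m, w p = 0 := by
    rw [Fintype.sum_prod_type]
    simp [hw, hsum]
  have hc : (WithLp.toLp 2 (fun p : Fin k × Fin m =>
      w p - (∑ l, w l) / (Fintype.card (Fin k × Fin m))) : EuclideanSpace ℝ (Fin k × Fin m)) = w := by
    ext p
    rw [hsumw]
    simp
  have hnw : ‖w‖ = Real.sqrt k := by
    rw [EuclideanSpace.norm_eq]
    congr 1
    rw [Fintype.sum_prod_type]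
    have : ∀ j : Fin k, ∑ l, ‖v j l‖ ^ 2 = 1 := by
      intro j
      have := hnorm j
      rw [EuclideanSpace.norm_eq] at this
      have h2 : Real.sqrt (∑ l, ‖v j l‖ ^ 2) ^ 2 = 1 ^ 2 := by rw [this]
      rwa [Real.sq_sqrt (by positivity), one_pow] at h2
    simp only [Real.norm_eq_abs, sq_abs] at this
    simp [hw, this]
  unfold layerNorm
  simp only [hc, hnw]
end
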